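/- arXiv:2309.09925 — 5 statements merged into one kernel-verified Lean document; each statement's English description precedes it below -/
import Mathlib

section
/- Let H̄_m be a real (m+1)×m matrix whose last row equals h · e_m^T for some h ∈ ℝ (i.e., all entries of the last row vanish except possibly the last, equal to h), and let H_m be the m×m matrix of its first m rows. Assume H_m is invertible. Then for λ ∈ ℝ and g ∈ ℝ^m: H̄_m^T H̄_m g = λ H_m^T g if and only if (H_m + h² · H_m^{−T} e_m e_m^T) g = λ g. -/
open Matrix

/-- Morgan's reformulation of the harmonic Ritz generalized eigenvalue problem as a
standard eigenvalue problem: `H̄_mᵀ H̄_m g = λ H_mᵀ g` iff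
`(H_m + h² H_m⁻ᵀ e_m e_mᵀ) g = λ g`, exploiting the Hessenberg structure (the last row of
`H̄_m` vanishes except for the entry `h = h_{m+1,m}`).
Here the paper's `m` is `m + 1`. -/
theorem stmt6 {m : ℕ}
    (Hbar : Matrix (Fin (m + 2)) (Fin (m + 1)) ℝ)
    (Hm : Matrix (Fin (m + 1)) (Fin (m + 1)) ℝ) (hHm : Hm = Hbar.submatrix Fin.castSucc id)
    (hinv : IsUnit Hm.det)
    (h : ℝ)
    (hrow : ∀ j, Hbar (Fin.last (m + 1)) j = if j = Fin.last m then h else 0)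
    (lam : ℝ) (g : Fin (m + 1) → ℝ) :
    (Hbarᵀ * Hbar).mulVec g = lam • Hmᵀ.mulVec g ↔
      (Hm + h ^ 2 • Matrix.vecMulVec ((Hmᵀ)⁻¹.mulVec (Pi.single (Fin.last m) 1))
          (Pi.single (Fin.last m) 1)).mulVec g = lam • g := by
  set e : Fin (m + 1) → ℝ := Pi.single (Fin.last m) 1 with he
  have hinvT : IsUnit Hmᵀ.det := by rwa [det_transpose]
  have hsplit : Hbarᵀ * Hbar = Hmᵀ * Hm + (h ^ 2) • vecMulVec e e := by
    ext i j
    simp only [mul_apply, Matrix.add_apply, transpose_apply, Matrix.smul_apply, vecMulVec_apply,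
      Fin.sum_univ_castSucc, hrow, hHm, submatrix_apply, id, he, Pi.single_apply,
      smul_eq_mul]
    by_cases hi : i = Fin.last m <;> by_cases hj : j = Fin.last m <;>
      simp [hi, hj] <;> ring
  have hTinv : Hmᵀ * (Hmᵀ)⁻¹ = 1 := mul_nonsing_inv _ hinvT
  have hcancel : Hmᵀ.mulVec ((Hmᵀ)⁻¹.mulVec e) = e := by
    rw [mulVec_mulVec, hTinv, one_mulVec]
  have hinj : Function.Injective (Hmᵀ.mulVec) := mulVec_injective_iff_isUnit.2 ((Matrix.isUnit_iff_isUnit_det _).2 hinvT)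
  have hvmv : ∀ (u : Fin (m+1) → ℝ), (vecMulVec u e).mulVec g = (e ⬝ᵥ g) • u := by
    intro u; ext i
    simp [vecMulVec_apply, mulVec, dotProduct, Finset.mul_sum, mul_assoc, mul_comm,
      mul_left_comm, Finset.sum_mul]
  have lhs_eq : (Hbarᵀ * Hbar).mulVec g
      = Hmᵀ.mulVec ((Hm + h ^ 2 • vecMulVec ((Hmᵀ)⁻¹.mulVec e) e).mulVec g) := by
    rw [hsplit, add_mulVec, add_mulVec, mulVec_add, ← mulVec_mulVec]
    congr 1
    rw [smul_mulVec, smul_mulVec, mulVec_smul, hvmv, hvmv,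
      mulVec_smul, hcancel]
  constructor
  · intro H
    apply hinj
    rw [← lhs_eq, H, mulVec_smul]
  · intro H
    rw [lhs_eq, H, mulVec_smul]
end

section
/- Let H̄ be a real (m+1)×m matrix whose first m rows form an invertible matrix H and whose last row equals δ · e_m^T for some δ ∈ ℝ. Let f = H^{−T} e_m, and let c ∈ ℝ^{m+1} be partitioned as c = (v, ω) with v ∈ ℝ^m the first m components and ω ∈ ℝ the last component. Let y ∈ ℝ^m satisfy the normal equations H̄^T (c − H̄ y) = 0. Then the least-squares residual satisfies the colinearity identity c − H̄ y = ((ω − δ f^T v) / (1 + δ² f^T f)) · w, where w ∈ ℝ^{m+1} is the vector whose first m components are −δ f and whose last component is 1. -/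
open Matrix

/-- The Rollin–Fichtner colinearity identity for the GMRES least-squares residual:
if `y` solves the normal equations `H̄ᵀ (c - H̄ y) = 0`, then
`c - H̄ y = ((ω - δ fᵀ v) / (1 + δ² fᵀ f)) • w` with `w = (-δ f, 1)`.
Here the paper's `m` is `m + 1`. -/
theorem stmt7 {m : ℕ}
    (Hbar : Matrix (Fin (m + 2)) (Fin (m + 1)) ℝ)
    (H : Matrix (Fin (m + 1)) (Fin (m + 1)) ℝ) (hH : H = Hbar.submatrix Fin.castSucc id)
    (hinv : IsUnit H.det)
    (δ : ℝ)
    (hrow : ∀ j, Hbar (Fin.last (m + 1)) j = if j = Fin.last m then δ else 0)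
    (f : Fin (m + 1) → ℝ) (hf : f = (Hᵀ)⁻¹.mulVec (Pi.single (Fin.last m) 1))
    (c : Fin (m + 2) → ℝ)
    (v : Fin (m + 1) → ℝ) (hv : v = fun j => c (Fin.castSucc j))
    (ω : ℝ) (hω : ω = c (Fin.last (m + 1)))
    (y : Fin (m + 1) → ℝ)
    (hy : Hbarᵀ.mulVec (c - Hbar.mulVec y) = 0)
    (w : Fin (m + 2) → ℝ) (hw : w = Fin.snoc (-δ • f) 1) :
    c - Hbar.mulVec y = ((ω - δ * (f ⬝ᵥ v)) / (1 + δ ^ 2 * (f ⬝ᵥ f))) • w := by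
  set r : Fin (m + 2) → ℝ := c - Hbar.mulVec y with hr
  set t : ℝ := r (Fin.last (m + 1)) with htdef
  set rv : Fin (m + 1) → ℝ := fun i => r (Fin.castSucc i) with hrv
  have hdetT : IsUnit (Hᵀ).det := by rwa [Matrix.det_transpose]
  -- Normal equations, split:
  have key : Hᵀ.mulVec rv = (-(δ * t)) • (Pi.single (Fin.last m) 1 : Fin (m+1) → ℝ) := by
    funext j
    have h0 := congrFun hy j
    simp only [Matrix.mulVec, dotProduct, Matrix.transpose_apply, Pi.zero_apply] at h0
    rw [Fin.sum_univ_castSucc, hrow j] at h0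
    simp only [Matrix.mulVec, dotProduct, Matrix.transpose_apply, Pi.smul_apply,
      smul_eq_mul]
    have : ∀ i : Fin (m + 1), H i j = Hbar (Fin.castSucc i) j := by
      intro i; rw [hH]; rfl
    rcases eq_or_ne j (Fin.last m) with hj | hj
    · subst hj
      rw [if_pos rfl] at h0
      simp only [this, Pi.single_eq_same, mul_one, hrv, htdef]
      linarith [h0]
    · rw [if_neg hj] at h0
      simp only [this, Pi.single_eq_of_ne hj, mul_zero, hrv, htdef]
      linarith [h0]
  -- Recover rv:
  have hrvf : rv = (-(δ * t)) • f := by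
    have := congrArg (fun z => (Hᵀ)⁻¹.mulVec z) key
    simpa only [Matrix.mulVec_mulVec, Matrix.nonsing_inv_mul _ hdetT, Matrix.one_mulVec,
      Matrix.mulVec_smul, hf] using this
  -- H y = v - rv:
  have hHy : H.mulVec y = v - rv := by
    funext i
    have : rv i = c (Fin.castSucc i) - (Hbar.mulVec y) (Fin.castSucc i) := rfl
    have h2 : (Hbar.mulVec y) (Fin.castSucc i) = H.mulVec y i := by
      rw [hH]; rfl
    rw [hv]
    simp only [Pi.sub_apply]
    rw [this, h2]; ring
  -- f ⬝ᵥ (H y) = y last: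
  have hflast : f ⬝ᵥ H.mulVec y = y (Fin.last m) := by
    rw [Matrix.dotProduct_mulVec, hf]
    have : Matrix.vecMul ((Hᵀ)⁻¹.mulVec (Pi.single (Fin.last m) 1)) H
        = Pi.single (Fin.last m) 1 := by
      rw [← Matrix.mulVec_transpose, Matrix.mulVec_mulVec, Matrix.mul_nonsing_inv _ hdetT,
        Matrix.one_mulVec]
    rw [this, single_dotProduct, one_mul]
  -- t = ω - δ * y last:
  have hlastHbar : (Hbar.mulVec y) (Fin.last (m + 1)) = δ * y (Fin.last m) := by
    simp only [Matrix.mulVec, dotProduct, hrow, ite_mul, zero_mul,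
      Finset.sum_ite_eq', Finset.mem_univ, if_pos]
  have ht1 : t = ω - δ * y (Fin.last m) := by
    rw [htdef, hr, hω]
    simp only [Pi.sub_apply, hlastHbar]
  have hylast : y (Fin.last m) = f ⬝ᵥ v + (δ * t) * (f ⬝ᵥ f) := by
    rw [← hflast, hHy, hrvf]
    rw [dotProduct_sub, dotProduct_smul]
    simp only [smul_eq_mul]; ring
  have hpos : (0:ℝ) < 1 + δ ^ 2 * (f ⬝ᵥ f) := by
    have : (0:ℝ) ≤ f ⬝ᵥ f := by
      simp only [dotProduct]
      exact Finset.sum_nonneg fun i _ => mul_self_nonneg _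
    nlinarith [sq_nonneg δ]
  have ht : t = (ω - δ * (f ⬝ᵥ v)) / (1 + δ ^ 2 * (f ⬝ᵥ f)) := by
    rw [eq_div_iff hpos.ne']
    rw [hylast] at ht1
    nlinarith [ht1]
  -- conclude
  funext i
  refine Fin.lastCases ?_ ?_ i
  · show r (Fin.last (m + 1)) = _
    rw [hw]
    simp only [Pi.smul_apply, Fin.snoc_last, smul_eq_mul, mul_one]
    exact ht
  · intro i
    show r (Fin.castSucc i) = _
    have : r (Fin.castSucc i) = rv i := rfl
    rw [this, hrvf, hw]
    simp only [Pi.smul_apply, Fin.snoc_castSucc, Pi.smul_apply, smul_eq_mul,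
      Pi.neg_apply, neg_mul]
    rw [ht]
    ring
end

section
/- Let A be a real n×n matrix, b, x0 ∈ ℝ^n, r0 = b − A x0. Let U_k, C_k be real n×k matrices with A U_k = C_k and C_k^T C_k = I_k; let V_{m+1} be a real n×(m+1) matrix with orthonormal columns satisfying C_k^T V_{m+1} = 0, with first m columns V_m, and suppose (I − C_k C_k^T) A V_m = V_{m+1} H̄_m for a real (m+1)×m matrix H̄_m. Set x_k = x0 + U_k C_k^T r0, r_k = (I − C_k C_k^T) r0, and let y* ∈ ℝ^m minimize ‖r_k − V_{m+1} H̄_m y‖₂ over y ∈ ℝ^m. Then x_{k+1} = x_k + (I − U_k C_k^T A) V_m y* satisfies ‖b − A x_{k+1}‖₂ ≤ ‖b − A x‖₂ for every x of the form x = x0 + U_k w + V_m y with w ∈ ℝ^k and y ∈ ℝ^m. -/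
open Matrix

/-- Euclidean norm of a vector in `ℝ^n`. -/
noncomputable def norm2 {n : ℕ} (v : Fin n → ℝ) : ℝ := Real.sqrt (∑ i, v i ^ 2)

lemma norm2_eq_dot {n : ℕ} (v : Fin n → ℝ) : norm2 v = Real.sqrt (v ⬝ᵥ v) := by
  simp [norm2, dotProduct, sq]

lemma pyth {n : ℕ} (u v : Fin n → ℝ) (h : u ⬝ᵥ v = 0) : norm2 u ≤ norm2 (u + v) := by
  rw [norm2_eq_dot, norm2_eq_dot]
  apply Real.sqrt_le_sqrt
  have hvv : 0 ≤ v ⬝ᵥ v := by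
    simp only [dotProduct]
    exact Finset.sum_nonneg fun i _ => mul_self_nonneg _
  have : (u + v) ⬝ᵥ (u + v) = u ⬝ᵥ u + v ⬝ᵥ v := by
    rw [add_dotProduct, dotProduct_add, dotProduct_add, h, dotProduct_comm v u, h]
    ring
  linarith

/-- Global residual minimization property of the GCRO iterate: the GCRO iterate `x_{k+1}`
minimizes the residual norm over `x0 + range U_k ⊕ range V_m`. -/
theorem stmt10 {n k m : ℕ} (A : Matrix (Fin n) (Fin n) ℝ)
    (b x0 : Fin n → ℝ) (r0 : Fin n → ℝ) (hr0 : r0 = b - A.mulVec x0)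
    (U C : Matrix (Fin n) (Fin k) ℝ) (hAU : A * U = C) (hC : Cᵀ * C = 1)
    (V : Matrix (Fin n) (Fin (m + 1)) ℝ) (hV : Vᵀ * V = 1) (hCV : Cᵀ * V = 0)
    (Vm : Matrix (Fin n) (Fin m) ℝ) (hVm : Vm = V.submatrix id Fin.castSucc)
    (Hbar : Matrix (Fin (m + 1)) (Fin m) ℝ)
    (hArn : (1 - C * Cᵀ) * A * Vm = V * Hbar)
    (xk : Fin n → ℝ) (hxk : xk = x0 + U.mulVec (Cᵀ.mulVec r0))
    (rk : Fin n → ℝ) (hrk : rk = (1 - C * Cᵀ).mulVec r0)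
    (ystar : Fin m → ℝ)
    (hystar : ∀ y : Fin m → ℝ,
      norm2 (rk - V.mulVec (Hbar.mulVec ystar)) ≤ norm2 (rk - V.mulVec (Hbar.mulVec y)))
    (xk1 : Fin n → ℝ) (hxk1 : xk1 = xk + ((1 - U * Cᵀ * A) * Vm).mulVec ystar) :
    ∀ (w : Fin k → ℝ) (y : Fin m → ℝ),
      norm2 (b - A.mulVec xk1) ≤ norm2 (b - A.mulVec (x0 + U.mulVec w + Vm.mulVec y)) := by
  intro w y
  have hAUC : A * (U * Cᵀ) = C * Cᵀ := by rw [← Matrix.mul_assoc, hAU]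
  have hA1 : A * (1 - U * Cᵀ * A) = (1 - C * Cᵀ) * A := by
    rw [Matrix.mul_sub, Matrix.sub_mul, Matrix.mul_one, Matrix.one_mul,
      show U * Cᵀ * A = U * (Cᵀ * A) from Matrix.mul_assoc .., ← Matrix.mul_assoc, hAU,
      Matrix.mul_assoc]
  have h1 : A * ((1 - U * Cᵀ * A) * Vm) = V * Hbar := by
    rw [← Matrix.mul_assoc, hA1, hArn]
  have h2 : A * Vm = V * Hbar + C * (Cᵀ * (A * Vm)) := by
    rw [← hArn]
    simp only [Matrix.sub_mul, Matrix.one_mul, Matrix.mul_assoc]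
    abel
  have hAUCA : A * (U * (Cᵀ * A)) = C * (Cᵀ * A) := by
    rw [← Matrix.mul_assoc, hAU]
  have hrkv : rk = r0 - C.mulVec (Cᵀ.mulVec r0) := by
    rw [hrk, Matrix.sub_mulVec, Matrix.one_mulVec, ← Matrix.mulVec_mulVec]
  have eq1 : b - A.mulVec xk1 = rk - V.mulVec (Hbar.mulVec ystar) := by
    rw [hxk1, hxk, hrkv, hr0]
    simp only [Matrix.mulVec_add, Matrix.mulVec_sub, Matrix.mulVec_mulVec, hAU, hAUC, hAUCA, h1]
    abel
  set z : Fin k → ℝ := Cᵀ.mulVec r0 - w - (Cᵀ * (A * Vm)).mulVec y with hz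
  have h2v : (A * Vm).mulVec y
      = (V * Hbar).mulVec y + (C * (Cᵀ * (A * Vm))).mulVec y := by
    conv_lhs => rw [h2]
    rw [Matrix.add_mulVec]
  have eq2 : b - A.mulVec (x0 + U.mulVec w + Vm.mulVec y)
      = (rk - V.mulVec (Hbar.mulVec y)) + C.mulVec z := by
    rw [hz, hrkv, hr0]
    simp only [Matrix.mulVec_add, Matrix.mulVec_sub, Matrix.mulVec_mulVec, hAU, hAUC, hAUCA]
    rw [h2v]
    abel
  have horth : (rk - V.mulVec (Hbar.mulVec y)) ⬝ᵥ C.mulVec z = 0 := by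
    have hCrk : Cᵀ * (1 - C * Cᵀ) = 0 := by
      rw [Matrix.mul_sub, Matrix.mul_one, ← Matrix.mul_assoc, hC, Matrix.one_mul, sub_self]
    have hCVH : Cᵀ * (V * Hbar) = 0 := by
      rw [← Matrix.mul_assoc, hCV, Matrix.zero_mul]
    have key : Cᵀ.mulVec (rk - V.mulVec (Hbar.mulVec y)) = 0 := by
      subst hrk
      rw [Matrix.mulVec_sub]
      simp [Matrix.mulVec_mulVec, hCrk, hCVH]
    rw [dotProduct_mulVec, ← Matrix.mulVec_transpose, key, zero_dotProduct]
  rw [eq1, eq2]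
  exact le_trans (hystar y) (pyth _ _ horth)
end

section
/- Let A be a real n×n matrix, V_{m+1} a real n×(m+1) matrix with first m columns V_m, H̄_m a real (m+1)×m matrix with A V_m = V_{m+1} H̄_m, and r1 ∈ ℝ^n with (A V_m)^T r1 = 0. Let P_k be a real m×k matrix, and suppose H̄_m P_k = Q R where Q is a real (m+1)×k matrix and R is an invertible real k×k matrix. Define C_k = V_{m+1} Q. Then C_k^T r1 = 0. -/
open Matrix

/-- The end-of-cycle residual stays orthogonal to the recycled subspace built in GCRO-DR:
with `(A V_m)ᵀ r1 = 0`, the reduced QR factorization `H̄_m P_k = Q R` (`R` nonsingular)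
and `C_k = V_{m+1} Q`, we get `C_kᵀ r1 = 0`. -/
theorem stmt12 {n m k : ℕ} (A : Matrix (Fin n) (Fin n) ℝ)
    (V : Matrix (Fin n) (Fin (m + 1)) ℝ)
    (Vm : Matrix (Fin n) (Fin m) ℝ) (hVm : Vm = V.submatrix id Fin.castSucc)
    (Hbar : Matrix (Fin (m + 1)) (Fin m) ℝ) (hArn : A * Vm = V * Hbar)
    (r1 : Fin n → ℝ) (hr1 : (A * Vm)ᵀ.mulVec r1 = 0)
    (P : Matrix (Fin m) (Fin k) ℝ)
    (Q : Matrix (Fin (m + 1)) (Fin k) ℝ) (R : Matrix (Fin k) (Fin k) ℝ)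
    (hQR : Hbar * P = Q * R) (hR : IsUnit R.det)
    (C : Matrix (Fin n) (Fin k) ℝ) (hC : C = V * Q) :
    Cᵀ.mulVec r1 = 0 := by
  have hCR : C * R = (A * Vm) * P := by
    rw [hC, hArn, Matrix.mul_assoc, Matrix.mul_assoc, hQR]
  have h1 : (C * R)ᵀ.mulVec r1 = 0 := by
    rw [hCR, Matrix.transpose_mul, ← Matrix.mulVec_mulVec, hr1, Matrix.mulVec_zero]
  have h2 : Rᵀ.mulVec (Cᵀ.mulVec r1) = 0 := by
    rwa [Matrix.mulVec_mulVec, ← Matrix.transpose_mul]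
  have hinv : (R⁻¹)ᵀ * Rᵀ = 1 := by
    rw [← Matrix.transpose_mul, Matrix.mul_nonsing_inv R hR, Matrix.transpose_one]
  calc Cᵀ.mulVec r1 = ((R⁻¹)ᵀ * Rᵀ).mulVec (Cᵀ.mulVec r1) := by rw [hinv, Matrix.one_mulVec]
    _ = (R⁻¹)ᵀ.mulVec (Rᵀ.mulVec (Cᵀ.mulVec r1)) := by rw [← Matrix.mulVec_mulVec]
    _ = 0 := by rw [h2, Matrix.mulVec_zero]
end

section
/- Let H̄_m be a real (m+1)×m matrix whose first m rows form an invertible matrix H_m and whose last row equals h · e_m^T for some h ∈ ℝ, and let M be a real (m+1)×m matrix whose last row is zero, with M' denoting the m×m matrix of its first m rows. Set f = H_m^{−T} e_m. Then for θ ∈ ℝ and g ∈ ℝ^m: H̄_m^T H̄_m g = θ H̄_m^T M g if and only if (H_m + h² f e_m^T) g = θ M' g. -/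
open Matrix

/-- Reformulation of the generalized harmonic Ritz eigenvalue problem of GCRO-DR:
with the last row of `H̄_m` equal to `h e_mᵀ`, `H_m` invertible, the last row of `M`
zero and `f = H_m⁻ᵀ e_m`, we have `H̄_mᵀ H̄_m g = θ H̄_mᵀ M g` iff
`(H_m + h² f e_mᵀ) g = θ M' g`. Here the paper's `m` is `m + 1`. -/
theorem stmt15 {m : ℕ}
    (Hbar : Matrix (Fin (m + 2)) (Fin (m + 1)) ℝ)
    (Hm : Matrix (Fin (m + 1)) (Fin (m + 1)) ℝ) (hHm : Hm = Hbar.submatrix Fin.castSucc id)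
    (hinv : IsUnit Hm.det)
    (h : ℝ)
    (hrow : ∀ j, Hbar (Fin.last (m + 1)) j = if j = Fin.last m then h else 0)
    (M : Matrix (Fin (m + 2)) (Fin (m + 1)) ℝ)
    (hM : ∀ j, M (Fin.last (m + 1)) j = 0)
    (M' : Matrix (Fin (m + 1)) (Fin (m + 1)) ℝ) (hM' : M' = M.submatrix Fin.castSucc id)
    (f : Fin (m + 1) → ℝ) (hf : f = (Hmᵀ)⁻¹.mulVec (Pi.single (Fin.last m) 1))
    (θ : ℝ) (g : Fin (m + 1) → ℝ) :
    (Hbarᵀ * Hbar).mulVec g = θ • (Hbarᵀ * M).mulVec g ↔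
      (Hm + h ^ 2 • Matrix.vecMulVec f (Pi.single (Fin.last m) 1)).mulVec g
        = θ • M'.mulVec g := by
  set e : Fin (m + 1) → ℝ := Pi.single (Fin.last m) 1 with he
  have hTinv : IsUnit (Hmᵀ).det := by rwa [det_transpose]
  have hHf : Hmᵀ.mulVec f = e := by
    rw [hf, mulVec_mulVec, mul_nonsing_inv _ hTinv, one_mulVec]
  -- key matrix identity 1 : Hbarᵀ * M = Hmᵀ * M'
  have key1 : Hbarᵀ * M = Hmᵀ * M' := by
    ext i j
    simp only [mul_apply, transpose_apply, hHm, hM', submatrix_apply, id]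
    rw [Fin.sum_univ_castSucc]
    simp [hM]
  -- key matrix identity 2 : Hbarᵀ * Hbar = Hmᵀ * (Hm + h² f eᵀ)
  have key2 : Hbarᵀ * Hbar = Hmᵀ * (Hm + h ^ 2 • Matrix.vecMulVec f e) := by
    have : Hmᵀ * Matrix.vecMulVec f e = Matrix.vecMulVec e e := by
      rw [Matrix.vecMulVec_eq (Fin 1), Matrix.vecMulVec_eq (Fin 1), ← Matrix.mul_assoc]
      congr 1
      ext i j
      simp [mul_apply, ← hHf, mulVec, dotProduct]
    rw [Matrix.mul_add, Matrix.mul_smul, this]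
    ext i j
    simp only [mul_apply, transpose_apply, hHm, submatrix_apply, id,
      Matrix.add_apply, Matrix.smul_apply, Matrix.vecMulVec_apply, smul_eq_mul]
    rw [Fin.sum_univ_castSucc, hrow i, hrow j]
    simp only [he, Pi.single_apply]
    by_cases hi : i = Fin.last m <;> by_cases hj : j = Fin.last m <;>
      simp [hi, hj] <;> ring
  have hinj : Function.Injective (Hmᵀ).mulVec :=
    mulVec_injective_iff_isUnit.2 (isUnit_iff_isUnit_det _ |>.2 hTinv)
  rw [key1, key2, ← mulVec_mulVec, ← mulVec_mulVec, ← mulVec_smul]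
  exact ⟨fun hx => hinj hx, fun hx => by rw [hx]⟩
end
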